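/- Let D be a k×k real matrix with nonnegative off-diagonal entries, let f : [0,∞) → ℝ be continuous, and let u : [0,∞) → ℝ^k be differentiable and satisfy du_t/dt ≥ (D + f(t)·I) u_t componentwise for all t ≥ 0. Then for all t ≥ 0, u_t ≥ exp(tD + (∫₀ᵗ f(s) ds)·I) u_0 componentwise, where exp denotes the matrix exponential. -/

import Mathlib

open Filter Topology


lemma hasDerivAt_expMulVec (k : ℕ) (D : Matrix (Fin k) (Fin k) ℝ) (x : Fin k → ℝ) (t : ℝ) :
    HasDerivAt (fun s : ℝ => (NormedSpace.exp (s • D)).mulVec x)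
      (D.mulVec ((NormedSpace.exp (t • D)).mulVec x)) t := by
  letI : SeminormedRing (Matrix (Fin k) (Fin k) ℝ) := Matrix.linftyOpSemiNormedRing
  letI : NormedRing (Matrix (Fin k) (Fin k) ℝ) := Matrix.linftyOpNormedRing
  letI : NormedAlgebra ℝ (Matrix (Fin k) (Fin k) ℝ) := Matrix.linftyOpNormedAlgebra
  have h := hasDerivAt_exp_smul_const' (𝕂 := ℝ) D t
  let L : Matrix (Fin k) (Fin k) ℝ →ₗ[ℝ] (Fin k → ℝ) :=
    { toFun := fun A => A.mulVec x,
      map_add' := fun A B => Matrix.add_mulVec A B x,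
      map_smul' := fun c A => Matrix.smul_mulVec c A x }
  have hL := (LinearMap.toContinuousLinearMap L).hasFDerivAt (x := NormedSpace.exp (t • D))
  have := hL.comp_hasDerivAt t h
  rw [Matrix.mulVec_mulVec]; exact this

lemma exp_split (k : ℕ) (D : Matrix (Fin k) (Fin k) ℝ) (t c : ℝ) :
    NormedSpace.exp (t • D + c • (1 : Matrix (Fin k) (Fin k) ℝ))
      = Real.exp c • NormedSpace.exp (t • D) := by
  have hc : Commute (t • D) (c • (1 : Matrix (Fin k) (Fin k) ℝ)) :=
    ((Commute.one_right D).smul_left t).smul_right c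
  have h3 := Matrix.exp_add_of_commute (t • D) (c • (1 : Matrix (Fin k) (Fin k) ℝ)) hc
  rw [h3]
  have h2 : NormedSpace.exp (algebraMap ℝ (Matrix (Fin k) (Fin k) ℝ) c)
      = algebraMap ℝ _ (NormedSpace.exp c) := by
    letI : SeminormedRing (Matrix (Fin k) (Fin k) ℝ) := Matrix.linftyOpSemiNormedRing
    letI : NormedRing (Matrix (Fin k) (Fin k) ℝ) := Matrix.linftyOpNormedRing
    letI : NormedAlgebra ℝ (Matrix (Fin k) (Fin k) ℝ) := Matrix.linftyOpNormedAlgebra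
    exact (NormedSpace.map_exp (algebraMap ℝ (Matrix (Fin k) (Fin k) ℝ))
      (continuous_algebraMap _ _) c).symm
  have h1 : c • (1 : Matrix (Fin k) (Fin k) ℝ) = algebraMap ℝ _ c :=
    (Algebra.algebraMap_eq_smul_one c).symm
  rw [h1, h2, ← Real.exp_eq_exp_ℝ, Algebra.algebraMap_eq_smul_one]
  rw [mul_smul_comm, mul_one]

lemma core (k : ℕ) (hk : 1 ≤ k) (M : Matrix (Fin k) (Fin k) ℝ)
    (hM : ∀ i j, 0 ≤ M i j)
    (y yd : ℝ → Fin k → ℝ)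
    (hd : ∀ t ∈ Set.Ici (0:ℝ), HasDerivAt y (yd t) t)
    (h0 : ∀ i, y 0 i = 0)
    (hle : ∀ t ∈ Set.Ici (0:ℝ), ∀ i, (M.mulVec (y t)) i ≤ yd t i) :
    ∀ t ∈ Set.Ici (0:ℝ), ∀ i, 0 ≤ y t i := by
  haveI : Nonempty (Fin k) := ⟨⟨0, hk⟩⟩
  intro T hT i0
  set K : ℝ := 1 + ∑ i, ∑ j, M i j with hK
  have hsum_nonneg : ∀ i, 0 ≤ ∑ j, M i j := fun i =>
    Finset.sum_nonneg fun j _ => hM i j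
  have hrow : ∀ i, (∑ j, M i j) + 1 ≤ K := by
    intro i
    have : ∑ j, M i j ≤ ∑ i, ∑ j, M i j :=
      Finset.single_le_sum (fun i _ => hsum_nonneg i) (Finset.mem_univ i)
    simp only [hK]; linarith
  have main : ∀ ε > (0:ℝ), ∀ t ∈ Set.Icc (0:ℝ) T, ∀ i, 0 < y t i + ε * Real.exp (K * t) := by
    intro ε hε
    by_contra hcon
    push_neg at hcon
    obtain ⟨t1, ht1, i1, hzi1⟩ := hcon
    set z : ℝ → Fin k → ℝ := fun t i => y t i + ε * Real.exp (K * t) with hzdef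
    have hScl : ∀ i, {t | t ∈ Set.Icc (0:ℝ) T ∧ z t i ≤ 0} ⊆ Set.Icc (0:ℝ) T :=
      fun i t ht => ht.1
    set S : Set ℝ := ⋃ i, {t | t ∈ Set.Icc (0:ℝ) T ∧ z t i ≤ 0} with hSdef
    have hSsub : S ⊆ Set.Icc (0:ℝ) T := Set.iUnion_subset hScl
    have hSne : S.Nonempty := ⟨t1, Set.mem_iUnion.2 ⟨i1, ht1, hzi1⟩⟩
    have hSbdd : BddBelow S := ⟨0, fun s hs => (hSsub hs).1⟩
    set t₀ := sInf S with ht₀def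
    have ht₀cl : t₀ ∈ closure S := csInf_mem_closure hSne hSbdd
    have ht₀Icc : t₀ ∈ Set.Icc (0:ℝ) T :=
      isClosed_Icc.closure_subset ((closure_mono hSsub) ht₀cl)
    -- continuity of each component at points of Ici 0
    have hcont : ∀ t ∈ Set.Ici (0:ℝ), ∀ i, ContinuousAt (fun s => z s i) t := by
      intro t ht i
      have h1 : ContinuousAt (fun s => y s i) t :=
        ((hasDerivAt_pi.1 (hd t ht)) i).continuousAt
      exact h1.add ((Real.continuous_exp.comp (continuous_const.mul continuous_id)).continuousAt.const_mul ε)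
    -- find index i* with z t₀ i* ≤ 0
    rw [closure_iUnion_of_finite] at ht₀cl
    obtain ⟨istar, histar⟩ := Set.mem_iUnion.1 ht₀cl
    have hzt₀le : z t₀ istar ≤ 0 := by
      have hne : (𝓝[{t | t ∈ Set.Icc (0:ℝ) T ∧ z t istar ≤ 0}] t₀).NeBot :=
        mem_closure_iff_nhdsWithin_neBot.1 histar
      have htendsto : Tendsto (fun s => z s istar)
          (𝓝[{t | t ∈ Set.Icc (0:ℝ) T ∧ z t istar ≤ 0}] t₀) (𝓝 (z t₀ istar)) :=
        ((hcont t₀ ht₀Icc.1 istar).continuousWithinAt).tendsto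
      refine le_of_tendsto htendsto ?_
      filter_upwards [self_mem_nhdsWithin] with s hs using hs.2
    -- positivity strictly before t₀
    have hpos : ∀ s, 0 ≤ s → s < t₀ → ∀ i, 0 < z s i := by
      intro s hs0 hst i
      by_contra hzs
      push_neg at hzs
      have hsT : s ≤ T := le_trans hst.le ht₀Icc.2
      have : s ∈ S := Set.mem_iUnion.2 ⟨i, ⟨hs0, hsT⟩, hzs⟩
      exact absurd (csInf_le hSbdd this) (not_le.2 hst)
    -- t₀ > 0
    have ht₀pos : 0 < t₀ := by
      rcases lt_or_eq_of_le ht₀Icc.1 with h | h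
      · exact h
      · exfalso
        have : z 0 istar = ε := by simp [hzdef, h0]
        rw [← h] at hzt₀le
        rw [this] at hzt₀le
        linarith
    -- left limits: z t₀ j ≥ 0 for all j
    have hge : ∀ j, 0 ≤ z t₀ j := by
      intro j
      have hnb : (𝓝[<] t₀).NeBot := inferInstance
      have htd : Tendsto (fun s => z s j) (𝓝[<] t₀) (𝓝 (z t₀ j)) :=
        ((hcont t₀ ht₀Icc.1 j).continuousWithinAt).tendsto
      refine ge_of_tendsto htd ?_
      have hev : ∀ᶠ s in 𝓝[<] t₀, 0 < s :=
        eventually_nhdsWithin_of_eventually_nhds (eventually_gt_nhds ht₀pos)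
      have hev2 : ∀ᶠ s in 𝓝[<] t₀, s < t₀ := eventually_mem_nhdsWithin
      filter_upwards [hev, hev2] with s hs1 hs2 using (hpos s hs1.le hs2 j).le
    have hzt₀ : z t₀ istar = 0 := le_antisymm hzt₀le (hge istar)
    -- derivative of z at t₀ in coordinate istar
    have ht₀Ici : t₀ ∈ Set.Ici (0:ℝ) := ht₀Icc.1
    have hdz : HasDerivAt (fun s => z s istar)
        (yd t₀ istar + ε * (Real.exp (K * t₀) * K)) t₀ := by
      have h1 : HasDerivAt (fun s => y s istar) (yd t₀ istar) t₀ :=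
        hasDerivAt_pi.1 (hd t₀ ht₀Ici) istar
      have h2 : HasDerivAt (fun s : ℝ => Real.exp (K * s)) (Real.exp (K * t₀) * K) t₀ := by
        have := ((hasDerivAt_id t₀).const_mul K).exp
        simpa [mul_comm] using this
      exact h1.add (h2.const_mul ε)
    -- the derivative is positive
    have hexp_pos : 0 < Real.exp (K * t₀) := Real.exp_pos _
    have hyd_pos : 0 < yd t₀ istar + ε * (Real.exp (K * t₀) * K) := by
      have hM1 : (M.mulVec (y t₀)) istar ≤ yd t₀ istar := hle t₀ ht₀Ici istar
      have hMy : ∑ j, M istar j * (-(ε * Real.exp (K * t₀))) ≤ (M.mulVec (y t₀)) istar := by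
        rw [Matrix.mulVec, dotProduct]
        refine Finset.sum_le_sum fun j _ => ?_
        refine mul_le_mul_of_nonneg_left ?_ (hM istar j)
        have := hge j
        simp only [hzdef] at this
        linarith
      have hsum : ∑ j, M istar j * (-(ε * Real.exp (K * t₀)))
          = -(ε * Real.exp (K * t₀)) * ∑ j, M istar j := by
        rw [Finset.mul_sum]; exact Finset.sum_congr rfl fun j _ => mul_comm _ _
      have hrowi := hrow istar
      have h5 : -(ε * Real.exp (K * t₀)) * ∑ j, M istar j + ε * (Real.exp (K * t₀) * K) > 0 := by
        have hnn := hsum_nonneg istar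
        nlinarith [mul_pos hε hexp_pos]
      nlinarith [hsum ▸ hMy, hM1]
    -- contradiction via slope
    have hslope := hasDerivAt_iff_tendsto_slope.1 hdz
    have hev3 : ∀ᶠ s in 𝓝[≠] t₀, 0 < slope (fun s => z s istar) t₀ s :=
      hslope.eventually (eventually_gt_nhds hyd_pos)
    have hsub : 𝓝[<] t₀ ≤ 𝓝[≠] t₀ :=
      nhdsWithin_mono _ fun s hs => ne_of_lt hs
    have hev4 : ∀ᶠ s in 𝓝[<] t₀, 0 < slope (fun s => z s istar) t₀ s := hsub hev3
    have hev5 : ∀ᶠ s in 𝓝[<] t₀, 0 < s :=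
      eventually_nhdsWithin_of_eventually_nhds (eventually_gt_nhds ht₀pos)
    have hev6 : ∀ᶠ s in 𝓝[<] t₀, s < t₀ := eventually_mem_nhdsWithin
    obtain ⟨s, hs4, hs5, hs6⟩ := (hev4.and (hev5.and hev6)).exists
    -- slope = (z s - z t₀)/(s - t₀) = z s / (s - t₀) < 0 since z s > 0, s < t₀
    have hzs_pos : 0 < z s istar := hpos s hs5.le hs6 istar
    rw [slope_def_field] at hs4
    rw [hzt₀] at hs4
    have hden : s - t₀ < 0 := by linarith
    have : (z s istar - 0) / (s - t₀) < 0 := div_neg_of_pos_of_neg (by linarith) hden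
    linarith
  -- conclude from main
  by_contra hcon
  push_neg at hcon
  have hexp_pos : 0 < Real.exp (K * T) := Real.exp_pos _
  set ε : ℝ := -(y T i0) / (2 * Real.exp (K * T)) with hεdef
  have hε : 0 < ε := div_pos (by linarith) (by linarith)
  have := main ε hε T ⟨hT, le_refl T⟩ i0
  have hcalc : ε * Real.exp (K * T) = -(y T i0) / 2 := by
    field_simp [hεdef]
    rw [hεdef]; field_simp
  rw [hcalc] at this
  linarith


/-- Comparison lemma (Lemma 2.4 of the paper). If `D` is a `k × k`
Metzler matrix (nonnegative off-diagonal entries), `f : [0,∞) → ℝ` is continuous and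
`u : [0,∞) → ℝ^k` is differentiable with `du_t/dt ≥ (D + f(t) I) u_t` componentwise
for all `t ≥ 0`, then `u_t ≥ exp (t D + (∫₀ᵗ f) I) u_0` componentwise for all `t ≥ 0`. -/
theorem stmt0 (k : ℕ) (hk : 1 ≤ k) (D : Matrix (Fin k) (Fin k) ℝ)
    (hMetzler : ∀ i j : Fin k, i ≠ j → 0 ≤ D i j)
    (f : ℝ → ℝ) (hf : ContinuousOn f (Set.Ici (0 : ℝ)))
    (u u' : ℝ → Fin k → ℝ)
    (hderiv : ∀ t ∈ Set.Ici (0 : ℝ), HasDerivAt u (u' t) t)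
    (hineq : ∀ t ∈ Set.Ici (0 : ℝ), ∀ i : Fin k,
      (D.mulVec (u t) + f t • u t) i ≤ u' t i) :
    ∀ t ∈ Set.Ici (0 : ℝ), ∀ i : Fin k,
      ((NormedSpace.exp
          (t • D + (∫ s in (0 : ℝ)..t, f s) • (1 : Matrix (Fin k) (Fin k) ℝ))).mulVec
        (u 0)) i ≤ u t i := by
  
  haveI : Nonempty (Fin k) := ⟨⟨0, hk⟩⟩
  set g : ℝ → ℝ := fun s => f (max s 0) with hgdef
  have hg : Continuous g :=
    hf.comp_continuous (continuous_id.max continuous_const) fun s => le_max_right s 0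
  set F : ℝ → ℝ := fun t => ∫ s in (0:ℝ)..t, g s with hFdef
  have hF : ∀ t : ℝ, HasDerivAt F (g t) t := fun t =>
    intervalIntegral.integral_hasDerivAt_right (hg.intervalIntegrable 0 t)
      (hg.stronglyMeasurableAtFilter _ _) hg.continuousAt
  have hgf : ∀ t ∈ Set.Ici (0:ℝ), g t = f t := by
    intro t ht
    simp only [hgdef]
    rw [max_eq_left ht]
  have hFeq : ∀ t ∈ Set.Ici (0:ℝ), (∫ s in (0:ℝ)..t, f s) = F t := by
    intro t ht
    apply intervalIntegral.integral_congr
    intro s hs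
    rw [Set.uIcc_of_le ht] at hs
    exact (hgf s hs.1).symm
  set c : ℝ := ∑ i, |D i i| with hcdef
  set M : Matrix (Fin k) (Fin k) ℝ := D + c • (1 : Matrix (Fin k) (Fin k) ℝ) with hMdef
  have hMnn : ∀ i j, 0 ≤ M i j := by
    intro i j
    have hMij : M i j = D i j + c * (if i = j then 1 else 0) := by
      simp [hMdef, Matrix.one_apply]
    by_cases hij : i = j
    · subst hij
      have h1 : |D i i| ≤ c :=
        Finset.single_le_sum (fun m _ => abs_nonneg (D m m)) (Finset.mem_univ i)
      have h2 := neg_abs_le (D i i)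
      rw [hMij]
      simp only [eq_self_iff_true, if_true, mul_one]
      linarith
    · have := hMetzler i j hij
      rw [hMij]
      simp only [if_neg hij, mul_zero]
      linarith
  set v : ℝ → Fin k → ℝ :=
    fun s => Real.exp (F s) • (NormedSpace.exp (s • D)).mulVec (u 0) with hvdef
  have hv0 : v 0 = u 0 := by
    simp [hvdef, hFdef, intervalIntegral.integral_same]
  have hv' : ∀ s : ℝ, HasDerivAt v (g s • v s + D.mulVec (v s)) s := by
    intro s
    have h1 : HasDerivAt (fun r => Real.exp (F r)) (Real.exp (F s) * g s) s := (hF s).exp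
    have h2 := hasDerivAt_expMulVec k D (u 0) s
    have h3 := h1.smul h2
    refine h3.congr_deriv ?_
    funext i
    simp [hvdef, Matrix.mulVec_smul, smul_smul]
    ring
  set w : ℝ → Fin k → ℝ := fun s => u s - v s with hwdef
  set φ : ℝ → ℝ := fun s => c * s - F s with hφdef
  have hφ' : ∀ s : ℝ, HasDerivAt φ (c - g s) s := by
    intro s
    have := ((hasDerivAt_id s).const_mul c).sub (hF s)
    rw [show c - g s = c * 1 - g s by ring]; exact this
  set y : ℝ → Fin k → ℝ := fun s => Real.exp (φ s) • w s with hydef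
  set yd : ℝ → Fin k → ℝ :=
    fun s => Real.exp (φ s) •
      ((c - g s) • w s + (u' s - (g s • v s + D.mulVec (v s)))) with hyddef
  have hyder : ∀ t ∈ Set.Ici (0:ℝ), HasDerivAt y (yd t) t := by
    intro t ht
    have h1 : HasDerivAt (fun s => Real.exp (φ s)) (Real.exp (φ t) * (c - g t)) t := (hφ' t).exp
    have h2 : HasDerivAt w (u' t - (g t • v t + D.mulVec (v t))) t :=
      (hderiv t ht).sub (hv' t)
    have h3 := h1.smul h2
    refine h3.congr_deriv ?_
    funext i
    simp [hyddef, hwdef, smul_smul]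
    ring
  have hy0 : ∀ i, y 0 i = 0 := by
    intro i
    simp [hydef, hwdef, hv0]
  have hcore_le : ∀ t ∈ Set.Ici (0:ℝ), ∀ i, (M.mulVec (y t)) i ≤ yd t i := by
    intro t ht i
    have hexp : (0:ℝ) < Real.exp (φ t) := Real.exp_pos _
    have key : D.mulVec (u t) i + f t * u t i ≤ u' t i := by
      have := hineq t ht i
      simpa using this
    have hgt : g t = f t := hgf t ht
    have h1 : (M.mulVec (y t)) i
        = Real.exp (φ t) * (D.mulVec (u t) i - D.mulVec (v t) i + c * u t i - c * v t i) := by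
      simp only [hydef, hwdef, hMdef, Matrix.mulVec_smul, Matrix.add_mulVec,
        Matrix.smul_mulVec, Matrix.one_mulVec, Matrix.mulVec_sub,
        Pi.smul_apply, Pi.add_apply, Pi.sub_apply, smul_eq_mul]
      ring
    have h2 : yd t i
        = Real.exp (φ t) * ((c - g t) * (u t i - v t i)
            + (u' t i - (g t * v t i + D.mulVec (v t) i))) := by
      simp only [hyddef, hwdef, Pi.smul_apply, Pi.add_apply, Pi.sub_apply, smul_eq_mul]
    rw [h1, h2]
    apply mul_le_mul_of_nonneg_left _ hexp.le
    rw [hgt]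
    nlinarith [key]
  have hy := core k hk M hMnn y yd hyder hy0 hcore_le
  intro t ht i
  rw [hFeq t ht, exp_split k D t (F t)]
  have hwnn : 0 ≤ u t i - v t i := by
    have h := hy t ht i
    simp only [hydef, hwdef, Pi.smul_apply, Pi.sub_apply, smul_eq_mul] at h
    by_contra hlt
    push_neg at hlt
    have : Real.exp (φ t) * (u t i - v t i) < 0 :=
      mul_neg_of_pos_of_neg (Real.exp_pos _) hlt
    linarith
  have hvi : (Real.exp (F t) • NormedSpace.exp (t • D)).mulVec (u 0) i = v t i := by
    simp [hvdef, Matrix.smul_mulVec]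
  rw [hvi]
  linarith
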